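/- For every k ≥ 1 and positive integer n, the number of cyclic subgroups of ℤ_n^k (the direct product of k copies of ℤ_n) equals Σ_{d ∣ n} J_k(d)/φ(d), where J_k(d) = d^k · Π_{p ∣ d} (1 - 1/p^k) is the Jordan totient function of order k. -/

import Mathlib

open Finset Nat ArithmeticFunction
open scoped ArithmeticFunction.zeta

noncomputable def Jq (k e : ℕ) : ℚ := (e : ℚ) ^ k * ∏ p ∈ e.primeFactors, (1 - 1 / (p : ℚ) ^ k)

noncomputable def Jfun (k : ℕ) (hk : 1 ≤ k) : ArithmeticFunction ℚ :=
  ⟨fun e => Jq k e, by simp [Jq, zero_pow (by omega : k ≠ 0)]⟩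

lemma Jfun_isMultiplicative (k : ℕ) (hk : 1 ≤ k) :
    (Jfun k hk).IsMultiplicative := by
  constructor
  · show Jq k 1 = 1
    simp [Jq]
  · intro m n hmn
    show Jq k (m * n) = Jq k m * Jq k n
    rcases eq_or_ne m 0 with rfl | hm
    · have : n = 1 := by simpa using hmn
      simp [Jq, this, zero_pow (by omega : k ≠ 0)]
    rcases eq_or_ne n 0 with rfl | hn'
    · have : m = 1 := by simpa using hmn
      simp [Jq, this, zero_pow (by omega : k ≠ 0)]
    unfold Jq
    rw [Nat.primeFactors_mul hm hn', Finset.prod_union hmn.disjoint_primeFactors]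
    push_cast
    ring

lemma sum_Jq (k : ℕ) (hk : 1 ≤ k) {d : ℕ} (hd : d ≠ 0) :
    ∑ e ∈ d.divisors, Jq k e = (d : ℚ) ^ k := by
  have key : (↑ζ * Jfun k hk) = ((pow k : ArithmeticFunction ℕ) : ArithmeticFunction ℚ) := by
    rw [IsMultiplicative.eq_iff_eq_on_prime_powers _ (isMultiplicative_zeta.natCast.mul (Jfun_isMultiplicative k hk))
      _ isMultiplicative_pow.natCast]
    intro p i hp
    rw [coe_zeta_mul_apply, Nat.sum_divisors_prime_pow hp]
    have hp0 : (p : ℚ) ≠ 0 := Nat.cast_ne_zero.mpr hp.pos.ne'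
    have hpk : (p : ℚ) ^ k ≠ 0 := pow_ne_zero _ hp0
    have step : ∀ j : ℕ, (Jfun k hk) (p ^ (j + 1)) = ((p:ℚ) ^ (j+1)) ^ k - ((p:ℚ) ^ j) ^ k := by
      intro j
      show Jq k (p ^ (j+1)) = _
      unfold Jq
      rw [Nat.primeFactors_prime_pow (by omega) hp, Finset.prod_singleton]
      push_cast
      field_simp
      ring
    induction i with
    | zero => simp [natCoe_apply, pow_apply, show Jq k 1 = 1 by simp [Jq],
        show (Jfun k hk) 1 = Jq k 1 from rfl]
    | succ i ih =>
      rw [sum_range_succ, ih, step i, natCoe_apply, natCoe_apply, pow_apply, pow_apply,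
        if_neg (by simp [hp.pos.ne']), if_neg (by simp [hp.pos.ne'])]
      push_cast
      ring
  have := congrArg (fun f => f d) key
  simp only [coe_zeta_mul_apply, natCoe_apply, pow_apply] at this
  rw [if_neg (by omega)] at this
  rw [show (∑ e ∈ d.divisors, Jq k e) = ∑ e ∈ d.divisors, (Jfun k hk) e from rfl, this]
  push_cast
  ring

lemma card_torsion_zmod {n d : ℕ} [NeZero n] (hd : d ∣ n) :
    Nat.card {x : ZMod n // addOrderOf x ∣ d} = d := by
  classical
  have hn : 0 < n := Nat.pos_of_ne_zero (NeZero.ne n)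
  have hd0 : d ≠ 0 := fun h => by simp [h] at hd; omega
  rw [Nat.card_eq_fintype_card, Fintype.card_subtype]
  have hcard : Fintype.card (ZMod n) = n := ZMod.card n
  calc (Finset.univ.filter fun x : ZMod n => addOrderOf x ∣ d).card
      = ∑ e ∈ d.divisors, (Finset.univ.filter fun x : ZMod n => addOrderOf x = e).card := by
        rw [Finset.card_eq_sum_card_fiberwise
          (f := fun x : ZMod n => addOrderOf x) (t := d.divisors) ?_]
        · refine Finset.sum_congr rfl fun e he => ?_
          rw [Finset.filter_filter]
          congr 1
          ext x
          simp only [Finset.mem_filter, Finset.mem_univ, true_and]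
          constructor
          · rintro ⟨-, rfl⟩; rfl
          · rintro rfl; exact ⟨(Nat.mem_divisors.mp he).1, rfl⟩
        · intro x hx
          simp only [Finset.mem_coe, Finset.mem_filter, Finset.mem_univ, true_and] at hx
          exact Nat.mem_divisors.mpr ⟨hx, hd0⟩
    _ = ∑ e ∈ d.divisors, e.totient := by
        refine Finset.sum_congr rfl fun e he => ?_
        have hen : e ∣ Fintype.card (ZMod n) := by
          rw [hcard]; exact (Nat.mem_divisors.mp he).1.trans hd
        simpa using IsAddCyclic.card_addOrderOf_eq_totient (α := ZMod n) hen
    _ = d := Nat.sum_totient d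

lemma card_torsion_pi (k : ℕ) {n d : ℕ} [NeZero n] (hd : d ∣ n) :
    Nat.card {g : Fin k → ZMod n // addOrderOf g ∣ d} = d ^ k := by
  have e1 : ∀ g : Fin k → ZMod n, (addOrderOf g ∣ d) ↔ ∀ i, addOrderOf (g i) ∣ d := by
    intro g
    simp only [addOrderOf_dvd_iff_nsmul_eq_zero, funext_iff, Pi.smul_apply, Pi.zero_apply]
  rw [Nat.card_congr ((Equiv.subtypeEquivRight e1).trans (Equiv.subtypePiEquivPi (p := fun _ x => addOrderOf x ∣ d)))]
  rw [Nat.card_pi]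
  simp [card_torsion_zmod hd]
  rw [← Nat.card_eq_fintype_card, card_torsion_zmod hd]


lemma partition_card (k : ℕ) {n d : ℕ} [NeZero n] (hd : d ∣ n) :
    ∑ e ∈ d.divisors, Nat.card {g : Fin k → ZMod n // addOrderOf g = e} = d ^ k := by
  classical
  have hd0 : d ≠ 0 := fun h => by
    subst h; exact NeZero.ne n (Nat.eq_zero_of_zero_dvd hd)
  rw [← card_torsion_pi k hd, Nat.card_eq_fintype_card, Fintype.card_subtype]
  rw [Finset.card_eq_sum_card_fiberwise
    (f := fun g : Fin k → ZMod n => addOrderOf g) (t := d.divisors)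
    (fun g hg => Nat.mem_divisors.mpr ⟨(Finset.mem_filter.mp hg).2, hd0⟩)]
  refine Finset.sum_congr rfl fun e he => ?_
  rw [Nat.card_eq_fintype_card, Fintype.card_subtype, Finset.filter_filter]
  congr 1
  ext g
  simp only [Finset.mem_filter, Finset.mem_univ, true_and]
  constructor
  · rintro rfl; exact ⟨(Nat.mem_divisors.mp he).1, rfl⟩
  · exact fun h => h.2

lemma card_orderOf_eq_Jq (k : ℕ) (hk : 1 ≤ k) {n : ℕ} [NeZero n] :
    ∀ d, d ∣ n → (Nat.card {g : Fin k → ZMod n // addOrderOf g = d} : ℚ) = Jq k d := by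
  intro d
  induction d using Nat.strong_induction_on with
  | _ d IH =>
    intro hd
    have hd0 : d ≠ 0 := fun h => by
      subst h; exact NeZero.ne n (Nat.eq_zero_of_zero_dvd hd)
    have hpart : (∑ e ∈ d.divisors,
        (Nat.card {g : Fin k → ZMod n // addOrderOf g = e} : ℚ)) = (d : ℚ) ^ k := by
      rw [← Nat.cast_sum, partition_card k hd]; push_cast; ring
    rw [← Nat.cons_self_properDivisors hd0, Finset.sum_cons] at hpart
    have hsumJ := sum_Jq k hk hd0
    rw [← Nat.cons_self_properDivisors hd0, Finset.sum_cons] at hsumJ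
    have hIH : ∑ e ∈ d.properDivisors,
        (Nat.card {g : Fin k → ZMod n // addOrderOf g = e} : ℚ)
        = ∑ e ∈ d.properDivisors, Jq k e := by
      refine Finset.sum_congr rfl fun e he => ?_
      obtain ⟨he1, he2⟩ := Nat.mem_properDivisors.mp he
      exact IH e he2 (he1.trans hd)
    rw [hIH] at hpart
    linarith [hpart, hsumJ]


theorem cyclic_subgroup_count_power (k : ℕ) (hk : 1 ≤ k) (n : ℕ) (hn : 0 < n) :
    (Nat.card {H : AddSubgroup (Fin k → ZMod n) // ∃ g, H = AddSubgroup.closure {g}} : ℚ) =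
      ∑ d ∈ n.divisors,
        ((d : ℚ) ^ k * ∏ p ∈ d.primeFactors, (1 - 1 / (p : ℚ) ^ k)) /
          (Nat.totient d : ℚ) := by
  classical
  haveI : NeZero n := ⟨hn.ne'⟩
  set G := Fin k → ZMod n with hG
  set f : G → AddSubgroup G := fun g => AddSubgroup.zmultiples g with hf
  -- every element has order dividing n
  have hord : ∀ g : G, addOrderOf g ∣ n := by
    intro g
    rw [addOrderOf_dvd_iff_nsmul_eq_zero]
    funext i
    show n • g i = 0
    rw [nsmul_eq_mul, ZMod.natCast_self, zero_mul]
  -- Step 1 : Nat.card of the subtype = card of the image finset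
  have step1 : Nat.card {H : AddSubgroup G // ∃ g, H = AddSubgroup.closure {g}}
      = (Finset.univ.image f).card := by
    have e1 : ∀ H : AddSubgroup G, (∃ g, H = AddSubgroup.closure {g}) ↔ H ∈ Set.range f := by
      intro H
      simp only [Set.mem_range, hf, AddSubgroup.zmultiples_eq_closure, eq_comm]
    rw [Nat.card_congr (Equiv.subtypeEquivRight e1)]
    have : Set.range f = ↑(Finset.univ.image f) := by
      rw [Finset.coe_image, Finset.coe_univ, Set.image_univ]
    rw [this]
    simpa using Nat.card_eq_finsetCard (Finset.univ.image f)
  -- generators of a fixed cyclic subgroup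
  have gencount : ∀ H ∈ Finset.univ.image f,
      (Finset.univ.filter fun g : G => f g = H).card = Nat.totient (Nat.card H) := by
    intro H hH
    obtain ⟨g0, -, hg0⟩ := Finset.mem_image.mp hH
    have hg0' : AddSubgroup.zmultiples g0 = H := hg0
    have hcyc : IsAddCyclic H := by
      refine isAddCyclic_of_addOrderOf_eq_card ⟨g0, hg0' ▸ AddSubgroup.mem_zmultiples g0⟩ ?_
      rw [AddSubgroup.addOrderOf_mk, ← Nat.card_zmultiples, hg0']
    haveI := hcyc
    haveI : Fintype H := Fintype.ofFinite H
    have htot : (Finset.univ.filter fun a : H => addOrderOf a = Nat.card H).card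
        = Nat.totient (Nat.card H) := by
      rw [Nat.card_eq_fintype_card]
      exact IsAddCyclic.card_addOrderOf_eq_totient (α := H) (d := Fintype.card H) dvd_rfl
    rw [← htot]
    apply Finset.card_bij (fun (g : G) hg =>
      (⟨g, by
        have hfg : AddSubgroup.zmultiples g = H := (Finset.mem_filter.mp hg).2
        exact hfg ▸ AddSubgroup.mem_zmultiples g⟩ : H))
    · intro g hg
      have hfg : AddSubgroup.zmultiples g = H := (Finset.mem_filter.mp hg).2
      simp only [Finset.mem_filter, Finset.mem_univ, true_and]
      rw [AddSubgroup.addOrderOf_mk, ← Nat.card_zmultiples, hfg]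
    · intro g1 h1 g2 h2 heq
      exact congrArg Subtype.val heq
    · intro h hh
      refine ⟨(h : G), ?_, rfl⟩
      simp only [Finset.mem_filter, Finset.mem_univ, true_and] at hh ⊢
      -- zmultiples ↑h = H
      have hmem : AddSubgroup.zmultiples (h : G) ≤ H := by
        rw [AddSubgroup.zmultiples_eq_closure, AddSubgroup.closure_le]
        simpa using h.2
      have hcard : Nat.card (AddSubgroup.zmultiples (h : G)) = Nat.card H := by
        rw [Nat.card_zmultiples, AddSubgroup.addOrderOf_coe, hh]
      refine le_antisymm hmem fun x hx => ?_
      have hfin : (H : Set G).Finite := Set.toFinite _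
      have hset := Set.eq_of_subset_of_ncard_le
        (show (AddSubgroup.zmultiples (h:G) : Set G) ⊆ H from hmem) ?_ hfin
      · show x ∈ (AddSubgroup.zmultiples (h:G) : Set G)
        rw [hset]; exact hx
      · rw [← Nat.card_coe_set_eq, ← Nat.card_coe_set_eq]
        exact le_of_eq (by simpa using hcard.symm)
  -- Step 2 : cardinality of image as a rational sum
  have step2 : ((Finset.univ.image f).card : ℚ)
      = ∑ g : G, 1 / (Nat.totient (addOrderOf g) : ℚ) := by
    rw [← Finset.sum_fiberwise_of_maps_to (g := f)
      (fun g _ => Finset.mem_image_of_mem f (Finset.mem_univ g))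
      (fun g : G => 1 / (Nat.totient (addOrderOf g) : ℚ))]
    rw [Finset.card_eq_sum_ones, Nat.cast_sum]
    refine Finset.sum_congr rfl fun H hH => ?_
    have hpos : 0 < Nat.totient (Nat.card H) := by
      haveI : Fintype H := Fintype.ofFinite H
      exact Nat.totient_pos.mpr Nat.card_pos
    have : ∀ g ∈ Finset.univ.filter fun g : G => f g = H,
        1 / ((Nat.totient (addOrderOf g)) : ℚ) = 1 / (Nat.totient (Nat.card H) : ℚ) := by
      intro g hg
      have hfg : AddSubgroup.zmultiples g = H := (Finset.mem_filter.mp hg).2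
      rw [← Nat.card_zmultiples g, hfg]
    rw [Finset.sum_congr rfl this, Finset.sum_const, gencount H hH]
    push_cast
    rw [nsmul_eq_mul, mul_one_div_cancel (by exact_mod_cast hpos.ne')]
  -- Step 3 : regroup by order
  have step3 : (∑ g : G, 1 / (Nat.totient (addOrderOf g) : ℚ))
      = ∑ d ∈ n.divisors,
        ((d : ℚ) ^ k * ∏ p ∈ d.primeFactors, (1 - 1 / (p : ℚ) ^ k)) /
          (Nat.totient d : ℚ) := by
    rw [← Finset.sum_fiberwise_of_maps_to (g := fun g : G => addOrderOf g)
      (fun g _ => Nat.mem_divisors.mpr ⟨hord g, hn.ne'⟩)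
      (fun g : G => 1 / (Nat.totient (addOrderOf g) : ℚ))]
    refine Finset.sum_congr rfl fun d hd => ?_
    have : ∀ g ∈ Finset.univ.filter fun g : G => addOrderOf g = d,
        1 / ((Nat.totient (addOrderOf g)) : ℚ) = 1 / (Nat.totient d : ℚ) := by
      intro g hg
      rw [(Finset.mem_filter.mp hg).2]
    rw [Finset.sum_congr rfl this, Finset.sum_const]
    show _ = Jq k d / (Nat.totient d : ℚ)
    have hcnt : ((Finset.univ.filter fun g : G => addOrderOf g = d).card : ℚ) = Jq k d := by
      rw [← card_orderOf_eq_Jq k hk d (Nat.mem_divisors.mp hd).1]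
      congr 1
      rw [Nat.card_eq_fintype_card, Fintype.card_subtype]
    push_cast
    rw [nsmul_eq_mul, hcnt]
    ring
  rw [step1, step2, step3]
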